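/- The sequential compound (-1) → ∗ → ∗ has game value ↓, i.e., (-1) → (∗ → ∗) = ↓ = {∗ | 0}. -/

import Mathlib

universe u

namespace SetTheory

/-- Pre-games, as in the older Mathlib's `SetTheory.PGame` (removed from Mathlib since). -/
inductive PGame : Type (u + 1)
  | mk : ∀ α β : Type u, (α → PGame) → (β → PGame) → PGame

namespace PGame

/-- The type of left moves. -/
def LeftMoves : PGame → Type u
  | mk l _ _ _ => l

/-- The type of right moves. -/
def RightMoves : PGame → Type u
  | mk _ r _ _ => r

/-- The left options. -/
def moveLeft : ∀ g : PGame, LeftMoves g → PGame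
  | mk _l _ L _ => L

/-- The right options. -/
def moveRight : ∀ g : PGame, RightMoves g → PGame
  | mk _ _r _ R => R

instance : Zero PGame := ⟨⟨PEmpty, PEmpty, PEmpty.elim, PEmpty.elim⟩⟩

/-- Negation: swap the roles of the players. -/
def neg : PGame → PGame
  | mk l r L R => mk r l (fun i => neg (R i)) fun i => neg (L i)

instance : Neg PGame := ⟨neg⟩

/-- Auxiliary for addition: `x + y` by recursion on `y`, given `x`'s options plus anything. -/
def addAux {xl xr : Type u} (IHl : xl → PGame → PGame) (IHr : xr → PGame → PGame) :
    PGame → PGame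
  | mk yl yr yL yR => mk (xl ⊕ yl) (xr ⊕ yr)
      (Sum.elim (fun i => IHl i (mk yl yr yL yR)) fun j => addAux IHl IHr (yL j))
      (Sum.elim (fun i => IHr i (mk yl yr yL yR)) fun j => addAux IHl IHr (yR j))

/-- Disjunctive sum of pregames. -/
def add : PGame → PGame → PGame
  | mk _ _ xL xR => addAux (fun i => add (xL i)) (fun i => add (xR i))

instance : Add PGame := ⟨add⟩

instance : Sub PGame := ⟨fun x y => x + -y⟩

/-- The game `∗ = {0 | 0}`. -/
def star : PGame := ⟨PUnit, PUnit, fun _ => 0, fun _ => 0⟩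

/-- Simultaneous definition of `≤` (first component) and `⧏` (second component). -/
noncomputable def leLF (x : PGame) : PGame → Prop × Prop :=
  PGame.rec (motive := fun _ => PGame → Prop × Prop)
    (fun xl xr xL xR IHxl IHxr y =>
      PGame.rec (motive := fun _ => Prop × Prop)
        (fun yl yr yL yR IHyl IHyr =>
          ((∀ i, (IHxl i (mk yl yr yL yR)).2) ∧ ∀ j, (IHyr j).2,
           (∃ i, (IHyl i).1) ∨ ∃ j, (IHxr j (mk yl yr yL yR)).1)) y) x

/-- `x ≤ y`: Left wins `y - x` going second. -/
def le (x y : PGame) : Prop := (leLF x y).1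

instance : LE PGame := ⟨le⟩

/-- Equivalence of pregames: `x ≤ y ∧ y ≤ x`. -/
def Equiv (x y : PGame) : Prop := x ≤ y ∧ y ≤ x

instance : HasEquiv PGame := ⟨Equiv⟩

end PGame

end SetTheory

open SetTheory

open scoped PGame

namespace SeqCompound

open Classical in
/-- The sequential compound `G → H` of two pregames. -/
noncomputable def seqc : PGame → PGame → PGame
  | PGame.mk α β L R, H =>
    if Nonempty α then
      if Nonempty β then
        PGame.mk α β (fun a => seqc (L a) H) (fun b => seqc (R b) H)
      else
        PGame.mk α H.RightMoves (fun a => seqc (L a) H) H.moveRight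
    else
      if Nonempty β then
        PGame.mk H.LeftMoves β H.moveLeft (fun b => seqc (R b) H)
      else H

/-- A pregame is dicotic (all-small) if in every subposition,
Left has an option iff Right has an option. -/
def Dicotic : PGame → Prop
  | PGame.mk α β L R =>
    (Nonempty α ↔ Nonempty β) ∧ (∀ a, Dicotic (L a)) ∧ (∀ b, Dicotic (R b))

/-- The canonical nonnegative integer game `{n-1 | }`. -/
def intGame : ℕ → PGame
  | 0 => 0
  | n + 1 => PGame.mk PUnit PEmpty (fun _ => intGame n) PEmpty.elim

/-- `upSum k` is the disjunctive sum `↑¹ + ↑² + ⋯ + ↑ᵏ`. -/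
def upSum : ℕ → PGame
  | 0 => 0
  | k + 1 => upSum k +
      PGame.mk PUnit PUnit (fun _ => 0) (fun _ => PGame.star - upSum k)

/-- `upPow k` is the game `↑^(k+1) = {0 | ∗ - (↑¹ + ⋯ + ↑ᵏ)}`. -/
def upPow (k : ℕ) : PGame :=
  PGame.mk PUnit PUnit (fun _ => 0) (fun _ => PGame.star - upSum k)

/-- Sequential compound of a list of games. -/
noncomputable def seqList : List PGame → PGame
  | [] => 0
  | G :: l => seqc G (seqList l)

end SeqCompound

namespace SeqCompound

/-- The game `↓ = {∗ | 0}`. -/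
def down : PGame := PGame.mk PUnit PUnit (fun _ => PGame.star) fun _ => 0

theorem leLF_mk {xl xr : Type u} {xL : xl → PGame} {xR : xr → PGame}
    {yl yr : Type u} {yL : yl → PGame} {yR : yr → PGame} :
    PGame.leLF (PGame.mk xl xr xL xR) (PGame.mk yl yr yL yR) =
      ((∀ i, (PGame.leLF (xL i) (PGame.mk yl yr yL yR)).2) ∧
          ∀ j, (PGame.leLF (PGame.mk xl xr xL xR) (yR j)).2,
        (∃ i, (PGame.leLF (PGame.mk xl xr xL xR) (yL i)).1) ∨
          ∃ j, (PGame.leLF (xR j) (PGame.mk yl yr yL yR)).1) := rfl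

theorem zero_def' : (0 : PGame) = PGame.mk PEmpty PEmpty PEmpty.elim PEmpty.elim := rfl

theorem star_def' : PGame.star = PGame.mk PUnit PUnit (fun _ => 0) (fun _ => 0) := rfl

/-- `{∗ | ∗} ≈ 0`. -/
theorem starstar_equiv_zero :
    PGame.mk PUnit PUnit (fun _ => PGame.star) (fun _ => PGame.star) ≈ 0 := by
  show PGame.le _ _ ∧ PGame.le _ _
  simp [PGame.le, leLF_mk, zero_def', star_def']

theorem seqc_zero (H : PGame) : seqc 0 H = H := by
  show seqc (PGame.mk PEmpty PEmpty _ _) H = H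
  unfold seqc
  simp

theorem seqc_star_star : seqc PGame.star PGame.star =
    PGame.mk PUnit PUnit (fun _ => PGame.star) (fun _ => PGame.star) := by
  show seqc (PGame.mk PUnit PUnit (fun _ => 0) (fun _ => 0)) PGame.star = _
  unfold seqc
  rw [if_pos ⟨PUnit.unit⟩, if_pos ⟨PUnit.unit⟩]
  congr 1 <;> funext _ <;> exact seqc_zero _

theorem seqc_negOne (H : PGame) :
    seqc (-intGame 1) H =
      PGame.mk H.LeftMoves PUnit H.moveLeft (fun _ => H) := by
  show seqc (PGame.mk PEmpty PUnit _ _) H = _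
  unfold seqc
  rw [if_neg (by simp), if_pos ⟨PUnit.unit⟩]
  congr 1
  funext _
  show seqc (-(0 : PGame)) H = H
  show seqc (PGame.mk PEmpty PEmpty _ _) H = H
  unfold seqc
  simp

/-- `(-1) → (∗ → ∗) = ↓` as game values. -/
theorem negOne_seqc_star_star :
    seqc (-intGame 1) (seqc PGame.star PGame.star) ≈ down := by
  rw [seqc_negOne, seqc_star_star]
  show PGame.le _ _ ∧ PGame.le _ _
  simp [PGame.le, down, PGame.LeftMoves, PGame.moveLeft, leLF_mk, zero_def', star_def']

end SeqCompound
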